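/- (Theorem 4(iii).) Let K ≥ 3, let c > 0 be a real number, let Δ : Fin K → ℝ with Δ₂ ≠ Δ₁, and let s¹,…,sᴷ be nonzero vectors in ℝ³, written sᵏ = (s_xᵏ, s_yᵏ, s_zᵏ). Suppose at least one of the following holds: (a) there exists a real α with s_xᵏ + α·s_yᵏ = 0 for all k; (b) there exists a real β with s_xᵏ + β·s_zᵏ = 0 for all k; (c) there exists a real γ with s_yᵏ + γ·s_zᵏ = 0 for all k. Set uᵏ = sᵏ/(c·‖sᵏ‖), and define the (K−2)×3 real matrix Ψ whose row indexed by k ∈ {3,…,K} is (u¹ − uᵏ)ᵀ − ((Δ_k − Δ₁)/(Δ₂ − Δ₁))·(u¹ − u²)ᵀ. Then rank(Ψ) ≤ 2; in particular Ψ, and hence T̄ = [0; Ψ; 0], does not have full column rank 3. -/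
import Mathlib


open Matrix

/-- If a nonzero vector is in the kernel of `M.mulVec`, then `M` has rank at most 2. -/
lemma rank_le_two_of_mulVec_eq_zero {m : Type*} [Fintype m]
    (M : Matrix m (Fin 3) ℝ) (v : Fin 3 → ℝ) (hv : v ≠ 0)
    (h : M.mulVec v = 0) : M.rank ≤ 2 := by
  have hker : v ∈ LinearMap.ker M.mulVecLin := by
    simpa [Matrix.mulVecLin_apply] using h
  have hnt : Nontrivial (LinearMap.ker M.mulVecLin) :=
    ⟨⟨⟨v, hker⟩, 0, by simp [hv]⟩⟩
  have h1 : 1 ≤ Module.finrank ℝ (LinearMap.ker M.mulVecLin) := by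
    have := Module.finrank_pos_iff (R := ℝ)
      (M := (LinearMap.ker M.mulVecLin : Submodule ℝ (Fin 3 → ℝ))).2 hnt
    omega
  have hrn := LinearMap.finrank_range_add_finrank_ker M.mulVecLin
  have hdim : Module.finrank ℝ (Fin 3 → ℝ) = 3 := by simp
  rw [hdim] at hrn
  have : M.rank = Module.finrank ℝ (LinearMap.range M.mulVecLin) := rfl
  omega

/-- Theorem 4(iii): if the source positions all lie on a plane `x+αy=0`, `x+βz=0` or
`y+γz=0` through the origin of the reference array frame, then the block `Ψ` of the
reduced matrix `T̄ = [0; Ψ; 0]` has rank at most 2; in particular `T̄` does not have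
full column rank 3. -/
theorem Tbar_rank_deficient_of_coplanar_with_origin
    (K : ℕ) (hK : 3 ≤ K) (c : ℝ) (hc : 0 < c)
    (Δ : Fin K → ℝ)
    (hΔ : Δ ⟨1, by omega⟩ ≠ Δ ⟨0, by omega⟩)
    (s : Fin K → EuclideanSpace ℝ (Fin 3))
    (hs : ∀ k, s k ≠ 0)
    (hplane :
      (∃ α : ℝ, ∀ k, s k 0 + α * s k 1 = 0) ∨
      (∃ β : ℝ, ∀ k, s k 0 + β * s k 2 = 0) ∨
      (∃ γ : ℝ, ∀ k, s k 1 + γ * s k 2 = 0))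
    (u : Fin K → EuclideanSpace ℝ (Fin 3))
    (hu : ∀ k, u k = (c * ‖s k‖)⁻¹ • s k)
    (Ψ : Matrix (Fin (K - 2)) (Fin 3) ℝ)
    (hΨ : ∀ (i : Fin (K - 2)) (c3 : Fin 3), Ψ i c3 =
      (u ⟨0, by omega⟩ c3 - u ⟨(i : ℕ) + 2, by omega⟩ c3) -
        ((Δ ⟨(i : ℕ) + 2, by omega⟩ - Δ ⟨0, by omega⟩) /
            (Δ ⟨1, by omega⟩ - Δ ⟨0, by omega⟩)) *
          (u ⟨0, by omega⟩ c3 - u ⟨1, by omega⟩ c3))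
    (Tbar : Matrix (Fin 2 ⊕ (Fin (K - 2) ⊕ Fin (3 * K))) (Fin 3) ℝ)
    (hT : ∀ row col, Tbar row col =
      match row, col with
      | Sum.inl _, _ => 0
      | Sum.inr (Sum.inl i), c3 => Ψ i c3
      | Sum.inr (Sum.inr _), _ => 0) :
    Ψ.rank ≤ 2 ∧ Tbar.rank < 3 := by
  -- Produce a nonzero vector `v` orthogonal to all `u k`.
  obtain ⟨v, hv0, hvu⟩ :
      ∃ v : Fin 3 → ℝ, v ≠ 0 ∧
        ∀ k, u k 0 * v 0 + u k 1 * v 1 + u k 2 * v 2 = 0 := by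
    have key : ∀ (v : Fin 3 → ℝ),
        (∀ k, s k 0 * v 0 + s k 1 * v 1 + s k 2 * v 2 = 0) →
        ∀ k, u k 0 * v 0 + u k 1 * v 1 + u k 2 * v 2 = 0 := by
      intro v hsv k
      have := hsv k
      rw [hu k]
      simp only [PiLp.smul_apply, smul_eq_mul]
      linear_combination (c * ‖s k‖)⁻¹ * this
    rcases hplane with ⟨α, hα⟩ | ⟨β, hβ⟩ | ⟨γ, hγ⟩
    · refine ⟨![1, α, 0], ?_, key _ ?_⟩
      · intro h; have := congrFun h 0; simp at this
      · intro k
        have := hα k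
        simp only [Matrix.cons_val_zero, Matrix.cons_val_one, Matrix.head_cons, Matrix.cons_val_two, Matrix.tail_cons]
        linear_combination this
    · refine ⟨![1, 0, β], ?_, key _ ?_⟩
      · intro h; have := congrFun h 0; simp at this
      · intro k
        have := hβ k
        simp only [Matrix.cons_val_zero, Matrix.cons_val_one, Matrix.head_cons, Matrix.cons_val_two, Matrix.tail_cons]
        linear_combination this
    · refine ⟨![0, 1, γ], ?_, key _ ?_⟩
      · intro h; have := congrFun h 1; simp at this
      · intro k
        have := hγ k
        simp only [Matrix.cons_val_zero, Matrix.cons_val_one, Matrix.head_cons, Matrix.cons_val_two, Matrix.tail_cons]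
        linear_combination this
  have hΨv : Ψ.mulVec v = 0 := by
    funext i
    simp only [Matrix.mulVec, dotProduct, Fin.sum_univ_three, Pi.zero_apply]
    rw [hΨ i 0, hΨ i 1, hΨ i 2]
    have h0 := hvu ⟨0, by omega⟩
    have h1 := hvu ⟨1, by omega⟩
    have hi := hvu ⟨(i : ℕ) + 2, by omega⟩
    linear_combination h0 - hi -
      ((Δ ⟨(i : ℕ) + 2, by omega⟩ - Δ ⟨0, by omega⟩) /
        (Δ ⟨1, by omega⟩ - Δ ⟨0, by omega⟩)) * (h0 - h1)
  have hTv : Tbar.mulVec v = 0 := by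
    funext r
    simp only [Matrix.mulVec, dotProduct, Pi.zero_apply]
    rcases r with r | r | r
    · simp [hT]
    · have := congrFun hΨv r
      simpa [Matrix.mulVec, dotProduct, hT] using this
    · simp [hT]
  refine ⟨rank_le_two_of_mulVec_eq_zero _ v hv0 hΨv, ?_⟩
  have := rank_le_two_of_mulVec_eq_zero _ v hv0 hTv
  omega
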